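/- With G, κ, β, χ as above and h ▷ g := g⁻¹ h g · χ(h,g), the identity h₁ ▷ (χ(h₁,h₂)·h₂) = h₁ ▷ h₂ holds for all h₁, h₂ ∈ G, and more generally (h₁ ▷ h₂) ▷ h₃ = h₁ ▷ (h₂ h₃) for all h₁, h₂, h₃ ∈ G. -/

import Mathlib

/-- For the rack operation `h ▷ g = g⁻¹ h g · χ(h,g)` one has
`h₁ ▷ (χ(h₁,h₂)·h₂) = h₁ ▷ h₂` and `(h₁ ▷ h₂) ▷ h₃ = h₁ ▷ (h₂ h₃)`. -/
theorem rack_absorption_identities {G A : Type*} [Group G] [AddCommGroup A]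
    (κ : G → A) (hκ : ∀ g h : G, κ (g * h) = κ g + κ h)
    (β : A → A → G)
    (hcenter : ∀ a b : A, ∀ g : G, β a b * g = g * β a b)
    (hsymm : ∀ a b : A, β a b = β b a)
    (hadd : ∀ a a' b : A, β (a + a') b = β a b * β a' b)
    (hker : ∀ a b : A, κ (β a b) = 0) :
    let χ : G → G → G := fun h g => β (κ h) (κ g)
    let op : G → G → G := fun h g => g⁻¹ * h * g * χ h g
    (∀ h₁ h₂ : G, op h₁ (χ h₁ h₂ * h₂) = op h₁ h₂) ∧
    (∀ h₁ h₂ h₃ : G, op (op h₁ h₂) h₃ = op h₁ (h₂ * h₃)) := by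
  intro χ op
  have hone : κ (1 : G) = 0 := by
    have h := hκ 1 1; rw [one_mul] at h; exact right_eq_add.mp h
  have hinv : ∀ g : G, κ g⁻¹ = -κ g := fun g =>
    eq_neg_of_add_eq_zero_left (by rw [← hκ, inv_mul_cancel, hone])
  have hC : ∀ a b : A, ∀ g : G, Commute (β a b) g := fun a b g => hcenter a b g
  have conj : ∀ (a b : A) (g x : G), (β a b * x)⁻¹ * g * (β a b * x) = x⁻¹ * g * x := by
    intro a b g x
    rw [mul_inv_rev, mul_assoc x⁻¹, ((hC a b g).inv_left).eq]
    group
  constructor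
  · intro h₁ h₂
    have hk : κ (β (κ h₁) (κ h₂) * h₂) = κ h₂ := by simp [hκ, hker]
    show (β (κ h₁) (κ h₂) * h₂)⁻¹ * h₁ * (β (κ h₁) (κ h₂) * h₂) *
        β (κ h₁) (κ (β (κ h₁) (κ h₂) * h₂)) = h₂⁻¹ * h₁ * h₂ * β (κ h₁) (κ h₂)
    rw [hk, conj (κ h₁) (κ h₂) h₁ h₂]
  · intro h₁ h₂ h₃
    have hk : κ (op h₁ h₂) = κ h₁ := by
      show κ (h₂⁻¹ * h₁ * h₂ * β (κ h₁) (κ h₂)) = κ h₁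
      simp [hκ, hinv, hker]
    show h₃⁻¹ * op h₁ h₂ * h₃ * β (κ (op h₁ h₂)) (κ h₃) = _
    rw [hk]
    show h₃⁻¹ * (h₂⁻¹ * h₁ * h₂ * β (κ h₁) (κ h₂)) * h₃ * β (κ h₁) (κ h₃)
      = (h₂ * h₃)⁻¹ * h₁ * (h₂ * h₃) * β (κ h₁) (κ (h₂ * h₃))
    rw [hκ, hsymm (κ h₁) (κ h₂ + κ h₃), hadd, hsymm (κ h₂) (κ h₁), hsymm (κ h₃) (κ h₁),
      mul_inv_rev]
    have := (hC (κ h₁) (κ h₂) h₃).eq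
    calc h₃⁻¹ * (h₂⁻¹ * h₁ * h₂ * β (κ h₁) (κ h₂)) * h₃ * β (κ h₁) (κ h₃)
        = h₃⁻¹ * (h₂⁻¹ * h₁ * h₂) * (β (κ h₁) (κ h₂) * h₃) * β (κ h₁) (κ h₃) := by group
      _ = h₃⁻¹ * (h₂⁻¹ * h₁ * h₂) * (h₃ * β (κ h₁) (κ h₂)) * β (κ h₁) (κ h₃) := by rw [this]
      _ = h₃⁻¹ * h₂⁻¹ * h₁ * (h₂ * h₃) * (β (κ h₁) (κ h₂) * β (κ h₁) (κ h₃)) := by group
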